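/- The expected queue length restricted to subchain 2, L^2 = Σ_{k=0}^{n2} (n1+k)·π^2_{s+n1+k}, satisfies the exact identity L^2/π^2_{s+n1} − n1 = (λ/θ2)·[ (p + n1·(θ2 − θ1)/λ)·(1/π^2_{s+n1} − 1) + 1 − r2 ], where p = 1 − s·μ/λ. (Formula for L^2 established in the proof of Proposition 2.) -/

import Mathlib

open Finset

/-- Departure rate of the two-stage reneging birth-death chain. -/
noncomputable def depRate (s n1 : ℕ) (μ θ1 θ2 : ℝ) (k : ℕ) : ℝ :=
  if k ≤ s then (k : ℝ) * μ
  else if k ≤ s + n1 then (s : ℝ) * μ + ((k : ℝ) - (s : ℝ)) * θ1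
  else (s : ℝ) * μ + (n1 : ℝ) * θ1 + ((k : ℝ) - (s : ℝ) - (n1 : ℝ)) * θ2

/-- Stationary probability of state `k` in the subchain with state set `A`. -/
noncomputable def subProb (π : ℕ → ℝ) (A : Finset ℕ) (k : ℕ) : ℝ :=
  π k / ∑ k' ∈ A, π k'

theorem stmt_14 (lam μ θ1 θ2 : ℝ) (hlam : 0 < lam) (hμ : 0 < μ)
    (hθ1 : 0 < θ1) (hθ2 : 0 < θ2) (s n1 n2 : ℕ) (hs : 1 ≤ s) (π : ℕ → ℝ)
    (hpos : ∀ k ∈ Finset.Icc 0 (s + n1 + n2), 0 < π k)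
    (hbal : ∀ k, 1 ≤ k → k ≤ s + n1 + n2 →
      π k * depRate s n1 μ θ1 θ2 k = π (k - 1) * lam)
    (hsum : ∑ k ∈ Finset.Icc 0 (s + n1 + n2), π k = 1) :
    (∑ k ∈ Finset.range (n2 + 1), ((n1 : ℝ) + (k : ℝ)) * subProb π (Finset.Icc (s + n1) (s + n1 + n2)) (s + n1 + k)) / (subProb π (Finset.Icc (s + n1) (s + n1 + n2)) (s + n1)) - (n1 : ℝ) =
      lam / θ2 * (((1 - (s : ℝ) * μ / lam) + (n1 : ℝ) * (θ2 - θ1) / lam) * (1 / (subProb π (Finset.Icc (s + n1) (s + n1 + n2)) (s + n1)) - 1) + 1 - (subProb π (Finset.Icc (s + n1) (s + n1 + n2)) (s + n1 + n2) / (subProb π (Finset.Icc (s + n1) (s + n1 + n2)) (s + n1)))) := by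
  set f : ℕ → ℝ := fun k => π (s + n1 + k) with hf
  set T := ∑ k ∈ range (n2 + 1), f k with hT
  have hfpos : ∀ k, k ≤ n2 → 0 < f k := by
    intro k hk
    exact hpos _ (by simp; omega)
  have hTS : ∑ k' ∈ Icc (s + n1) (s + n1 + n2), π k' = T := by
    rw [← Finset.Ico_add_one_right_eq_Icc, Finset.sum_Ico_eq_sum_range]
    have h : s + n1 + n2 + 1 - (s + n1) = n2 + 1 := by omega
    rw [h]
  have hTpos : 0 < T := by
    rw [hT]
    apply Finset.sum_pos
    · intro k hk
      exact hfpos k (by simpa [Nat.lt_succ_iff] using hk)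
    · simp
  have H : ∀ k, k < n2 → θ2 * ((k : ℝ) + 1) * f (k + 1) =
      lam * f k - ((s : ℝ) * μ + (n1 : ℝ) * θ1) * f (k + 1) := by
    intro k hk
    have hb := hbal (s + n1 + (k + 1)) (by omega) (by omega)
    have hd : depRate s n1 μ θ1 θ2 (s + n1 + (k + 1)) =
        (s : ℝ) * μ + (n1 : ℝ) * θ1 + ((k : ℝ) + 1) * θ2 := by
      unfold depRate
      rw [if_neg (by omega), if_neg (by omega)]
      push_cast; ring
    rw [hd] at hb
    have he : s + n1 + (k + 1) - 1 = s + n1 + k := by omega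
    rw [he] at hb
    simp only [hf] at *
    linarith [hb]
  set Q := ∑ k ∈ range (n2 + 1), (k : ℝ) * f k with hQdef
  have hQ : θ2 * Q = lam * (T - f n2) - ((s : ℝ) * μ + (n1 : ℝ) * θ1) * (T - f 0) := by
    have h1 : θ2 * Q = ∑ k ∈ range (n2 + 1), θ2 * ((k : ℝ) * f k) := by
      rw [hQdef, Finset.mul_sum]
    rw [h1, Finset.sum_range_succ']
    simp only [Nat.cast_zero, zero_mul, mul_zero, add_zero]
    have h2 : ∀ k ∈ range n2, θ2 * (((k + 1 : ℕ) : ℝ) * f (k + 1)) =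
        lam * f k - ((s : ℝ) * μ + (n1 : ℝ) * θ1) * f (k + 1) := by
      intro k hk
      have := H k (mem_range.mp hk)
      push_cast
      linarith [this]
    rw [Finset.sum_congr rfl h2, Finset.sum_sub_distrib, ← Finset.mul_sum, ← Finset.mul_sum]
    have h3 : ∑ k ∈ range n2, f k = T - f n2 := by
      rw [hT, Finset.sum_range_succ]; ring
    have h4 : ∑ k ∈ range n2, f (k + 1) = T - f 0 := by
      rw [hT, Finset.sum_range_succ']; ring
    rw [h3, h4]
  have hsub : ∀ k, subProb π (Icc (s + n1) (s + n1 + n2)) (s + n1 + k) = f k / T := by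
    intro k; rw [subProb, hTS]
  have hsub0 : subProb π (Icc (s + n1) (s + n1 + n2)) (s + n1) = f 0 / T := by
    have := hsub 0
    simpa using this
  have hsum2 : ∑ k ∈ Finset.range (n2 + 1),
      ((n1 : ℝ) + (k : ℝ)) * subProb π (Finset.Icc (s + n1) (s + n1 + n2)) (s + n1 + k)
      = ((n1 : ℝ) * T + Q) / T := by
    have h5 : ∀ k ∈ range (n2 + 1),
        ((n1 : ℝ) + (k : ℝ)) * subProb π (Finset.Icc (s + n1) (s + n1 + n2)) (s + n1 + k)
        = ((n1 : ℝ) * f k + (k : ℝ) * f k) / T := by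
      intro k _
      rw [hsub]; ring
    rw [Finset.sum_congr rfl h5, ← Finset.sum_div, Finset.sum_add_distrib, ← Finset.mul_sum,
      ← hT, ← hQdef]
  rw [hsum2, hsub0, hsub n2]
  have hf0 : f 0 ≠ 0 := ne_of_gt (hfpos 0 (by omega))
  have hfn2 : f n2 ≠ 0 := ne_of_gt (hfpos n2 le_rfl)
  have hTne : T ≠ 0 := ne_of_gt hTpos
  field_simp
  linear_combination hQ
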